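/- Fix r ≥ 2 and reals m_1, …, m_r with 1 ≤ m_i ≤ γ_i·α for each i, where γ_i > 0, Σγ_i = 1, and α^{r−1} = (1−ε)^{r−1}·(log_b n)/∏_j γ_j. Then (Σ_{i=1}^r m_i)/(∏_{i=1}^r m_i) ≥ 1/(α^{r−1}·∏_j γ_j) = (1+ε')/log_b n, where ε' = (1−ε)^{−(r−1)} − 1 > 0. -/

import Mathlib

/-- For `1 ≤ m_i ≤ γ_i·α` with `α^{r−1} = (1−ε)^{r−1}·log_b n / ∏_j γ_j`:
`(Σ_i m_i)/(∏_i m_i) ≥ 1/(α^{r−1}·∏_j γ_j) = (1+ε')/log_b n` with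
`ε' = (1−ε)^{−(r−1)} − 1`. -/
theorem stmt_16 (r : ℕ) (hr : 2 ≤ r) (b : ℝ) (hb : 1 < b) (n : ℕ) (hn : 2 ≤ n)
    (γ : Fin r → ℝ) (hγ : ∀ i, 0 < γ i) (hsum : ∑ i, γ i = 1)
    (ε : ℝ) (hε : 0 < ε) (hε1 : ε < 1)
    (α : ℝ) (hα0 : 0 < α)
    (hα : α ^ (r - 1) = (1 - ε) ^ (r - 1) * Real.logb b n / ∏ j, γ j)
    (m : Fin r → ℝ) (hm : ∀ i, 1 ≤ m i ∧ m i ≤ γ i * α) :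
    (∑ i, m i) / (∏ i, m i) ≥ 1 / (α ^ (r - 1) * ∏ j, γ j) ∧
    1 / (α ^ (r - 1) * ∏ j, γ j) = (1 + (((1 - ε) ^ (r - 1))⁻¹ - 1)) / Real.logb b n := by
  have hγprod : 0 < ∏ j, γ j := Finset.prod_pos (fun i _ => hγ i)
  have hm0 : ∀ i, 0 < m i := fun i => lt_of_lt_of_le one_pos (hm i).1
  have hP : 0 < ∏ i, m i := Finset.prod_pos fun i _ => hm0 i
  have hC : 0 < α ^ (r - 1) * ∏ j, γ j := by positivity
  constructor
  · have key : ∀ i : Fin r, γ i / (α ^ (r - 1) * ∏ j, γ j) ≤ m i / ∏ j, m j := by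
      intro i
      have hcard : (Finset.univ.erase i).card = r - 1 := by
        simp [Finset.card_erase_of_mem]
      have hQ : 0 < ∏ j ∈ Finset.univ.erase i, m j :=
        Finset.prod_pos fun j _ => hm0 j
      have h1 : m i / ∏ j, m j = 1 / ∏ j ∈ Finset.univ.erase i, m j := by
        rw [← Finset.mul_prod_erase Finset.univ m (Finset.mem_univ i)]
        field_simp
        exact div_self (hm0 i).ne'
      have h2 : γ i / (α ^ (r - 1) * ∏ j, γ j)
          = 1 / ∏ j ∈ Finset.univ.erase i, (γ j * α) := by
        rw [Finset.prod_mul_distrib, Finset.prod_const, hcard,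
          ← Finset.mul_prod_erase Finset.univ γ (Finset.mem_univ i)]
        have := (hγ i).ne'
        have hQγ : 0 < ∏ j ∈ Finset.univ.erase i, γ j :=
          Finset.prod_pos fun j _ => hγ j
        field_simp
      rw [h1, h2]
      apply one_div_le_one_div_of_le hQ
      exact Finset.prod_le_prod (fun j _ => (hm0 j).le) (fun j _ => (hm j).2)
    calc 1 / (α ^ (r - 1) * ∏ j, γ j)
        = ∑ i, γ i / (α ^ (r - 1) * ∏ j, γ j) := by
          rw [← Finset.sum_div, hsum]
      _ ≤ ∑ i, m i / ∏ j, m j := Finset.sum_le_sum fun i _ => key i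
      _ = (∑ i, m i) / (∏ i, m i) := by rw [Finset.sum_div]
  · have hlog : 0 < Real.logb b n := by
      apply Real.logb_pos hb
      exact_mod_cast lt_of_lt_of_le one_lt_two hn
    have h1ε0 : 0 < 1 - ε := by linarith
    have h1ε : 0 < (1 - ε) ^ (r - 1) := by positivity
    rw [hα]
    field_simp
    ring
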